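/- Let k be a field and λ ∈ k with λ ≠ 0 and λ ≠ 1, and let R = k[x,y]/(F) where F = x(x−y²)(x−λy²). The cokernel of the map of free R-modules R⁶ → R⁶ given by the matrix Q_a(2) (the 6×6 matrix with rows (z,0,0,0,0,0), (0,xz,0,0,0,0), (0,0,xz,0,0,0), (−xy,0,0,xz',0,0), (0,−xy,0,0,xz',0), (0,0,−xy,0,0,xz'), where z = x−y², z' = x−λy²) is the R-module generated by six generators u², u₁¹², u₂¹², v₁, v₂, v₃ subject exactly to the relations z·u² = 0, xz·u₁¹² = 0, xz·u₂¹² = 0, xz'·v₁ − xy·u² = 0, xz'·v₂ − xy·u₁¹² = 0, xz'·v₃ − xy·u₂¹² = 0; in particular this module is annihilated by F and is a torsion-free R-module. -/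

import Mathlib

open MvPolynomial

noncomputable section

namespace T36

variable {k : Type} [Field k]

/-- `F = x (x - y²)(x - λ y²)` with `x = X 0`, `y = X 1`. -/
def F (lam : k) : MvPolynomial (Fin 2) k :=
  X 0 * (X 0 - X 1 ^ 2) * (X 0 - C lam * X 1 ^ 2)

/-- `R = k[x,y]/(F)`, the coordinate ring of the `T₃₆` singularity. -/
def R (k : Type) [Field k] (lam : k) : Type :=
  MvPolynomial (Fin 2) k ⧸ Ideal.span {F lam}

instance (k : Type) [Field k] (lam : k) : CommRing (R k lam) :=
  inferInstanceAs (CommRing (MvPolynomial (Fin 2) k ⧸ Ideal.span {F lam}))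

/-- The residue class in `R` of a polynomial. -/
def cls (lam : k) (g : MvPolynomial (Fin 2) k) : R k lam :=
  Ideal.Quotient.mk (Ideal.span {F lam}) g

/-- The class of `x` in `R`. -/
def xq (lam : k) : R k lam := cls lam (X 0)
/-- The class of `y` in `R`. -/
def yq (lam : k) : R k lam := cls lam (X 1)
/-- The class of `z = x - y²` in `R`. -/
def zq (lam : k) : R k lam := cls lam (X 0 - X 1 ^ 2)
/-- The class of `z' = x - λ y²` in `R`. -/
def z'q (lam : k) : R k lam := cls lam (X 0 - C lam * X 1 ^ 2)

/-- The matrix `Q_a(2)` over `R`. -/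
def Qa2R (lam : k) : Matrix (Fin 6) (Fin 6) (R k lam) :=
  !![zq lam, 0, 0, 0, 0, 0;
     0, xq lam * zq lam, 0, 0, 0, 0;
     0, 0, xq lam * zq lam, 0, 0, 0;
     -(xq lam * yq lam), 0, 0, xq lam * z'q lam, 0, 0;
     0, -(xq lam * yq lam), 0, 0, xq lam * z'q lam, 0;
     0, 0, -(xq lam * yq lam), 0, 0, xq lam * z'q lam]

end T36

namespace T36Aux

open MvPolynomial Matrix

variable {k : Type} [Field k]

lemma prime_x : Prime (X 0 : MvPolynomial (Fin 2) k) := by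
  refine (MulEquiv.prime_iff (MvPolynomial.finSuccEquiv k 1).toRingEquiv.toMulEquiv).mp ?_
  show Prime ((MvPolynomial.finSuccEquiv k 1) (X 0))
  rw [MvPolynomial.finSuccEquiv_X_zero]
  exact Polynomial.prime_X

lemma prime_zc (c : k) : Prime (X 0 - C c * X 1 ^ 2 : MvPolynomial (Fin 2) k) := by
  refine (MulEquiv.prime_iff (MvPolynomial.finSuccEquiv k 1).toRingEquiv.toMulEquiv).mp ?_
  show Prime ((MvPolynomial.finSuccEquiv k 1) (X 0 - C c * X 1 ^ 2))
  have h1 : (X 1 : MvPolynomial (Fin 2) k) = X (Fin.succ 0) := rfl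
  have hC : (MvPolynomial.finSuccEquiv k 1) (C c) = Polynomial.C (C c) := by
    simp [MvPolynomial.finSuccEquiv_apply]
  rw [_root_.map_sub, _root_.map_mul, _root_.map_pow, h1, MvPolynomial.finSuccEquiv_X_zero,
    MvPolynomial.finSuccEquiv_X_succ, hC, ← _root_.map_pow, ← _root_.map_mul]
  exact Polynomial.prime_X_sub_C _

lemma prime_z : Prime (X 0 - X 1 ^ 2 : MvPolynomial (Fin 2) k) := by
  simpa using prime_zc (1 : k)

section
local notation "px" => (X 0 : MvPolynomial (Fin 2) k)
local notation "py" => (X 1 : MvPolynomial (Fin 2) k)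
local notation "pz" => (X 0 - X 1 ^ 2 : MvPolynomial (Fin 2) k)

/-- Key divisibility lemma for the block with rows `(z,0)`, `(-xy, xz')`. -/
lemma keyAB (pz' : MvPolynomial (Fin 2) k) (hz' : Prime pz')
    (r v0 v3 c0 c3 : MvPolynomial (Fin 2) k)
    (hxr : ¬ px ∣ r) (hzr : ¬ pz ∣ r) (hz'r : ¬ pz' ∣ r)
    (h3 : px * pz * pz' ∣ r * v3 - c3 * (px * pz'))
    (h0 : px * pz * pz' ∣ r * v0 - (c0 * pz + c3 * (-(px * py)))) :
    ∃ s u : MvPolynomial (Fin 2) k,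
      v0 = s * pz + u * (-(px * py)) ∧ v3 = u * (px * pz') := by
  classical
  have hx : Prime (px) := prime_x
  have hz : Prime (pz) := prime_z
  obtain ⟨t3, ht3⟩ := h3
  have hxv3 : px ∣ v3 := by
    have : px ∣ r * v3 := ⟨c3 * pz' + pz * pz' * t3, by linear_combination ht3⟩
    rcases hx.dvd_mul.mp this with h | h
    · exact absurd h hxr
    · exact h
  obtain ⟨w3, hw3⟩ := hxv3
  have ht3' : r * w3 - c3 * pz' = pz * pz' * t3 := by
    have hcan : px * (r * w3 - c3 * pz') = px * (pz * pz' * t3) := by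
      rw [hw3] at ht3; linear_combination ht3
    exact mul_left_cancel₀ hx.ne_zero hcan
  have hz'w3 : pz' ∣ w3 := by
    have : pz' ∣ r * w3 := ⟨c3 + pz * t3, by linear_combination ht3'⟩
    rcases hz'.dvd_mul.mp this with h | h
    · exact absurd h hz'r
    · exact h
  obtain ⟨u, hu⟩ := hz'w3
  have hc3 : r * u - c3 = pz * t3 := by
    have hcan : pz' * (r * u - c3) = pz' * (pz * t3) := by
      rw [hu] at ht3'; linear_combination ht3'
    exact mul_left_cancel₀ hz'.ne_zero hcan
  obtain ⟨t0, ht0⟩ := h0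
  have hzdvd : pz ∣ v0 + u * (px * py) := by
    have : pz ∣ r * (v0 + u * (px * py)) :=
      ⟨c0 + t3 * px * py + px * pz' * t0, by linear_combination ht0 + px * py * hc3⟩
    rcases hz.dvd_mul.mp this with h | h
    · exact absurd h hzr
    · exact h
  obtain ⟨s, hs⟩ := hzdvd
  exact ⟨s, u, by linear_combination hs, by linear_combination hw3 + px * hu⟩

/-- Key divisibility lemma for the blocks with rows `(xz,0)`, `(-xy, xz')`. -/
lemma keyB (pz' : MvPolynomial (Fin 2) k) (hz' : Prime pz')
    (r v0 v3 c0 c3 : MvPolynomial (Fin 2) k)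
    (hxr : ¬ px ∣ r) (hzr : ¬ pz ∣ r) (hz'r : ¬ pz' ∣ r)
    (h3 : px * pz * pz' ∣ r * v3 - c3 * (px * pz'))
    (h0 : px * pz * pz' ∣ r * v0 - (c0 * (px * pz) + c3 * (-(px * py)))) :
    ∃ s u : MvPolynomial (Fin 2) k,
      v0 = s * (px * pz) + u * (-(px * py)) ∧ v3 = u * (px * pz') := by
  classical
  have hx : Prime (px) := prime_x
  have hz : Prime (pz) := prime_z
  obtain ⟨t3, ht3⟩ := h3
  have hxv3 : px ∣ v3 := by
    have : px ∣ r * v3 := ⟨c3 * pz' + pz * pz' * t3, by linear_combination ht3⟩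
    rcases hx.dvd_mul.mp this with h | h
    · exact absurd h hxr
    · exact h
  obtain ⟨w3, hw3⟩ := hxv3
  have ht3' : r * w3 - c3 * pz' = pz * pz' * t3 := by
    have hcan : px * (r * w3 - c3 * pz') = px * (pz * pz' * t3) := by
      rw [hw3] at ht3; linear_combination ht3
    exact mul_left_cancel₀ hx.ne_zero hcan
  have hz'w3 : pz' ∣ w3 := by
    have : pz' ∣ r * w3 := ⟨c3 + pz * t3, by linear_combination ht3'⟩
    rcases hz'.dvd_mul.mp this with h | h
    · exact absurd h hz'r
    · exact h
  obtain ⟨u, hu⟩ := hz'w3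
  have hc3 : r * u - c3 = pz * t3 := by
    have hcan : pz' * (r * u - c3) = pz' * (pz * t3) := by
      rw [hu] at ht3'; linear_combination ht3'
    exact mul_left_cancel₀ hz'.ne_zero hcan
  obtain ⟨t0, ht0⟩ := h0
  have hxv0 : px ∣ v0 := by
    have : px ∣ r * v0 := ⟨c0 * pz - c3 * py + pz * pz' * t0, by linear_combination ht0⟩
    rcases hx.dvd_mul.mp this with h | h
    · exact absurd h hxr
    · exact h
  obtain ⟨w0, hw0⟩ := hxv0
  have ht0' : r * w0 - (c0 * pz - c3 * py) = pz * pz' * t0 := by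
    have hcan : px * (r * w0 - (c0 * pz - c3 * py)) = px * (pz * pz' * t0) := by
      rw [hw0] at ht0; linear_combination ht0
    exact mul_left_cancel₀ hx.ne_zero hcan
  have hzdvd : pz ∣ w0 + u * py := by
    have : pz ∣ r * (w0 + u * py) :=
      ⟨c0 + t3 * py + pz' * t0, by linear_combination ht0' + py * hc3⟩
    rcases hz.dvd_mul.mp this with h | h
    · exact absurd h hzr
    · exact h
  obtain ⟨s, hs⟩ := hzdvd
  exact ⟨s, u, by linear_combination px * hs + hw0, by linear_combination hw3 + px * hu⟩

end

lemma vecMul_Qa2R (lam : k) (c : Fin 6 → T36.R k lam) :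
    c ᵥ* (T36.Qa2R lam) =
      ![c 0 * T36.zq lam + c 3 * (-(T36.xq lam * T36.yq lam)),
        c 1 * (T36.xq lam * T36.zq lam) + c 4 * (-(T36.xq lam * T36.yq lam)),
        c 2 * (T36.xq lam * T36.zq lam) + c 5 * (-(T36.xq lam * T36.yq lam)),
        c 3 * (T36.xq lam * T36.z'q lam),
        c 4 * (T36.xq lam * T36.z'q lam),
        c 5 * (T36.xq lam * T36.z'q lam)] := by
  funext j
  fin_cases j
  · show ∑ i, c i * T36.Qa2R lam i 0 = _
    rw [Fin.sum_univ_six]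
    show c 0 * T36.zq lam + c 1 * 0 + c 2 * 0 + c 3 * (-(T36.xq lam * T36.yq lam))
      + c 4 * 0 + c 5 * 0 = c 0 * T36.zq lam + c 3 * (-(T36.xq lam * T36.yq lam))
    ring
  · show ∑ i, c i * T36.Qa2R lam i 1 = _
    rw [Fin.sum_univ_six]
    show c 0 * 0 + c 1 * (T36.xq lam * T36.zq lam) + c 2 * 0 + c 3 * 0
      + c 4 * (-(T36.xq lam * T36.yq lam)) + c 5 * 0
      = c 1 * (T36.xq lam * T36.zq lam) + c 4 * (-(T36.xq lam * T36.yq lam))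
    ring
  · show ∑ i, c i * T36.Qa2R lam i 2 = _
    rw [Fin.sum_univ_six]
    show c 0 * 0 + c 1 * 0 + c 2 * (T36.xq lam * T36.zq lam) + c 3 * 0
      + c 4 * 0 + c 5 * (-(T36.xq lam * T36.yq lam))
      = c 2 * (T36.xq lam * T36.zq lam) + c 5 * (-(T36.xq lam * T36.yq lam))
    ring
  · show ∑ i, c i * T36.Qa2R lam i 3 = _
    rw [Fin.sum_univ_six]
    show c 0 * 0 + c 1 * 0 + c 2 * 0 + c 3 * (T36.xq lam * T36.z'q lam)
      + c 4 * 0 + c 5 * 0 = c 3 * (T36.xq lam * T36.z'q lam)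
    ring
  · show ∑ i, c i * T36.Qa2R lam i 4 = _
    rw [Fin.sum_univ_six]
    show c 0 * 0 + c 1 * 0 + c 2 * 0 + c 3 * 0
      + c 4 * (T36.xq lam * T36.z'q lam) + c 5 * 0 = c 4 * (T36.xq lam * T36.z'q lam)
    ring
  · show ∑ i, c i * T36.Qa2R lam i 5 = _
    rw [Fin.sum_univ_six]
    show c 0 * 0 + c 1 * 0 + c 2 * 0 + c 3 * 0
      + c 4 * 0 + c 5 * (T36.xq lam * T36.z'q lam) = c 5 * (T36.xq lam * T36.z'q lam)
    ring

lemma nzd_not_dvd (lam : k) {r : T36.R k lam} (hr : r ∈ nonZeroDivisors (T36.R k lam))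
    {rp p g : MvPolynomial (Fin 2) k} (hrp : T36.cls lam rp = r)
    (hF : T36.F lam = p * g) (hp : ¬ IsUnit p) (hg : g ≠ 0) : ¬ p ∣ rp := by
  rintro ⟨q, hq⟩
  have h1 : T36.cls lam g * r = 0 := by
    rw [← hrp]
    change (Ideal.Quotient.mk (Ideal.span {T36.F lam}) (g * rp) :
      MvPolynomial (Fin 2) k ⧸ Ideal.span {T36.F lam}) = 0
    rw [Ideal.Quotient.eq_zero_iff_mem, Ideal.mem_span_singleton, hF]
    exact ⟨q, by rw [hq]; ring⟩
  have h2 : T36.cls lam g = 0 := (mem_nonZeroDivisors_iff.mp hr).2 _ h1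
  change (Ideal.Quotient.mk (Ideal.span {T36.F lam}) g :
    MvPolynomial (Fin 2) k ⧸ Ideal.span {T36.F lam}) = 0 at h2
  rw [Ideal.Quotient.eq_zero_iff_mem, Ideal.mem_span_singleton, hF] at h2
  obtain ⟨t, ht⟩ := h2
  have hcan : g * 1 = g * (p * t) := by rw [mul_one]; linear_combination ht
  exact hp (IsUnit.of_mul_eq_one _ (mul_left_cancel₀ hg hcan).symm)

end T36Aux



set_option maxHeartbeats 2000000 in
set_option synthInstance.maxHeartbeats 1000000 in
/-- The cokernel of the map `R⁶ → R⁶` given by the matrix `Q_a(2)` (i.e. the quotient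
of the free module `R⁶` by the submodule spanned by the rows of `Q_a(2)`) is the
`R`-module with six generators `u², u₁¹², u₂¹², v₁, v₂, v₃` (the images of the
standard basis vectors) subject exactly to the relations
`z u² = 0`, `xz u₁¹² = 0`, `xz u₂¹² = 0`, `xz' v₁ − xy u² = 0`,
`xz' v₂ − xy u₁¹² = 0`, `xz' v₃ − xy u₂¹² = 0`; it is annihilated by `F` and is a
torsion‑free `R`-module. -/
theorem T36_Qa2_cokernel (k : Type) [Field k] (lam : k) (h0 : lam ≠ 0) (h1 : lam ≠ 1) :
    -- generators: the images of the six standard basis vectors generate the cokernel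
    (Submodule.span (T36.R k lam)
        (Set.range fun i : Fin 6 =>
          (Submodule.Quotient.mk (Pi.single i (1 : T36.R k lam)) :
            (Fin 6 → T36.R k lam) ⧸ LinearMap.range (T36.Qa2R lam).vecMulLinear)) = ⊤) ∧
    -- relations: a vector of coefficients yields the zero element of the cokernel
    -- if and only if it is an `R`-linear combination of the six listed relations
    (∀ v : Fin 6 → T36.R k lam,
      (Submodule.Quotient.mk v :
          (Fin 6 → T36.R k lam) ⧸ LinearMap.range (T36.Qa2R lam).vecMulLinear) = 0 ↔
        v ∈ Submodule.span (T36.R k lam)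
          ({![T36.zq lam, 0, 0, 0, 0, 0],
            ![0, T36.xq lam * T36.zq lam, 0, 0, 0, 0],
            ![0, 0, T36.xq lam * T36.zq lam, 0, 0, 0],
            ![-(T36.xq lam * T36.yq lam), 0, 0, T36.xq lam * T36.z'q lam, 0, 0],
            ![0, -(T36.xq lam * T36.yq lam), 0, 0, T36.xq lam * T36.z'q lam, 0],
            ![0, 0, -(T36.xq lam * T36.yq lam), 0, 0, T36.xq lam * T36.z'q lam]} :
            Set (Fin 6 → T36.R k lam))) ∧
    -- the cokernel is annihilated by `F`
    (∀ m : (Fin 6 → T36.R k lam) ⧸ LinearMap.range (T36.Qa2R lam).vecMulLinear,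
      T36.cls lam (T36.F lam) • m = 0) ∧
    -- the cokernel is a torsion-free `R`-module
    (Submodule.torsion (T36.R k lam)
        ((Fin 6 → T36.R k lam) ⧸ LinearMap.range (T36.Qa2R lam).vecMulLinear) = ⊥) := by
  classical
  have hrows : LinearMap.range (T36.Qa2R lam).vecMulLinear
      = Submodule.span (T36.R k lam) (Set.range (T36.Qa2R lam)) :=
    range_vecMulLinear _
  have hset : Set.range (T36.Qa2R lam) =
      ({![T36.zq lam, 0, 0, 0, 0, 0],
        ![0, T36.xq lam * T36.zq lam, 0, 0, 0, 0],
        ![0, 0, T36.xq lam * T36.zq lam, 0, 0, 0],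
        ![-(T36.xq lam * T36.yq lam), 0, 0, T36.xq lam * T36.z'q lam, 0, 0],
        ![0, -(T36.xq lam * T36.yq lam), 0, 0, T36.xq lam * T36.z'q lam, 0],
        ![0, 0, -(T36.xq lam * T36.yq lam), 0, 0, T36.xq lam * T36.z'q lam]} :
        Set (Fin 6 → T36.R k lam)) := by
    ext w
    simp only [Set.mem_range, Set.mem_insert_iff, Set.mem_singleton_iff]
    constructor
    · rintro ⟨i, rfl⟩
      fin_cases i
      · exact Or.inl rfl
      · exact Or.inr (Or.inl rfl)
      · exact Or.inr (Or.inr (Or.inl rfl))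
      · exact Or.inr (Or.inr (Or.inr (Or.inl rfl)))
      · exact Or.inr (Or.inr (Or.inr (Or.inr (Or.inl rfl))))
      · exact Or.inr (Or.inr (Or.inr (Or.inr (Or.inr rfl))))
    · rintro (rfl | rfl | rfl | rfl | rfl | rfl)
      exacts [⟨0, rfl⟩, ⟨1, rfl⟩, ⟨2, rfl⟩, ⟨3, rfl⟩, ⟨4, rfl⟩, ⟨5, rfl⟩]
  refine ⟨?_, ?_, ?_, ?_⟩
  · -- generators
    have hcomp : (Set.range fun i : Fin 6 =>
        (Submodule.Quotient.mk (Pi.single i (1 : T36.R k lam)) :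
          (Fin 6 → T36.R k lam) ⧸ LinearMap.range (T36.Qa2R lam).vecMulLinear))
        = (LinearMap.range (T36.Qa2R lam).vecMulLinear).mkQ ''
          (Set.range fun i : Fin 6 => Pi.single i (1 : T36.R k lam)) := by
      rw [← Set.range_comp]; rfl
    have hsp : Submodule.span (T36.R k lam)
        (Set.range fun i : Fin 6 => Pi.single i (1 : T36.R k lam)) = ⊤ := by
      have hb := (Pi.basisFun (T36.R k lam) (Fin 6)).span_eq
      have hfe : ⇑(Pi.basisFun (T36.R k lam) (Fin 6))
          = fun i : Fin 6 => Pi.single i (1 : T36.R k lam) :=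
        funext fun i => Pi.basisFun_apply _ _ i
      rwa [hfe] at hb
    rw [hcomp, ← Submodule.map_span, hsp, Submodule.map_top, Submodule.range_mkQ]
  · -- relations
    intro v
    rw [Submodule.Quotient.mk_eq_zero, hrows, hset]
  · -- annihilated by F
    intro m
    have hF0 : T36.cls lam (T36.F lam) = 0 := by
      change (Ideal.Quotient.mk (Ideal.span {T36.F lam}) (T36.F lam) :
        MvPolynomial (Fin 2) k ⧸ Ideal.span {T36.F lam}) = 0
      rw [Ideal.Quotient.eq_zero_iff_mem]
      exact Ideal.subset_span rfl
    rw [hF0, zero_smul]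
  · -- torsion-free
    rw [Submodule.eq_bot_iff]
    intro m hm
    obtain ⟨v, rfl⟩ := Submodule.Quotient.mk_surjective _ m
    obtain ⟨a, ha⟩ := (Submodule.mem_torsion_iff _).mp hm
    have ha' : (Submodule.Quotient.mk ((a : T36.R k lam) • v) :
        (Fin 6 → T36.R k lam) ⧸ LinearMap.range (T36.Qa2R lam).vecMulLinear) = 0 := by
      rw [Submodule.Quotient.mk_smul]; exact ha
    rw [Submodule.Quotient.mk_eq_zero] at ha'
    obtain ⟨c, hc⟩ := ha'
    rw [Matrix.vecMulLinear_apply, T36Aux.vecMul_Qa2R] at hc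
    have e0 : c 0 * T36.zq lam + c 3 * (-(T36.xq lam * T36.yq lam))
        = (a : T36.R k lam) * v 0 := congrFun hc 0
    have e1 : c 1 * (T36.xq lam * T36.zq lam) + c 4 * (-(T36.xq lam * T36.yq lam))
        = (a : T36.R k lam) * v 1 := congrFun hc 1
    have e2 : c 2 * (T36.xq lam * T36.zq lam) + c 5 * (-(T36.xq lam * T36.yq lam))
        = (a : T36.R k lam) * v 2 := congrFun hc 2
    have e3 : c 3 * (T36.xq lam * T36.z'q lam) = (a : T36.R k lam) * v 3 := congrFun hc 3
    have e4 : c 4 * (T36.xq lam * T36.z'q lam) = (a : T36.R k lam) * v 4 := congrFun hc 4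
    have e5 : c 5 * (T36.xq lam * T36.z'q lam) = (a : T36.R k lam) * v 5 := congrFun hc 5
    choose lift hlift using Ideal.Quotient.mk_surjective (I := Ideal.span {T36.F lam})
    set r : T36.R k lam := (a : T36.R k lam) with hrdef
    have hxr : ¬ (X 0 : MvPolynomial (Fin 2) k) ∣ lift r :=
      T36Aux.nzd_not_dvd lam a.2 (hlift r)
        (by unfold T36.F; ring) T36Aux.prime_x.not_unit
        (mul_ne_zero T36Aux.prime_z.ne_zero (T36Aux.prime_zc lam).ne_zero)
    have hzr : ¬ (X 0 - X 1 ^ 2 : MvPolynomial (Fin 2) k) ∣ lift r :=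
      T36Aux.nzd_not_dvd lam a.2 (hlift r)
        (by unfold T36.F; ring) T36Aux.prime_z.not_unit
        (mul_ne_zero T36Aux.prime_x.ne_zero (T36Aux.prime_zc lam).ne_zero)
    have hz'r : ¬ (X 0 - C lam * X 1 ^ 2 : MvPolynomial (Fin 2) k) ∣ lift r :=
      T36Aux.nzd_not_dvd lam a.2 (hlift r)
        (by unfold T36.F; ring) (T36Aux.prime_zc lam).not_unit
        (mul_ne_zero T36Aux.prime_x.ne_zero T36Aux.prime_z.ne_zero)
    have key : ∀ (A : MvPolynomial (Fin 2) k) (b : T36.R k lam),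
        Ideal.Quotient.mk (Ideal.span {T36.F lam}) A = b → b = 0 →
        (X 0 : MvPolynomial (Fin 2) k) * (X 0 - X 1 ^ 2) * (X 0 - C lam * X 1 ^ 2) ∣ A := by
      intro A b hA hb
      have : Ideal.Quotient.mk (Ideal.span {T36.F lam}) A = 0 := by rw [hA, hb]; rfl
      rw [Ideal.Quotient.eq_zero_iff_mem, Ideal.mem_span_singleton] at this
      exact this
    have d3 : (X 0 : MvPolynomial (Fin 2) k) * (X 0 - X 1 ^ 2) * (X 0 - C lam * X 1 ^ 2) ∣
        lift r * lift (v 3) - lift (c 3) * (X 0 * (X 0 - C lam * X 1 ^ 2)) := by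
      refine key _ (r * v 3 - c 3 * (T36.xq lam * T36.z'q lam)) ?_ (by linear_combination -e3)
      simp only [map_sub, map_mul, hlift]
      erw [hlift r, hlift (v 3), hlift (c 3)]
      rfl
    have d0 : (X 0 : MvPolynomial (Fin 2) k) * (X 0 - X 1 ^ 2) * (X 0 - C lam * X 1 ^ 2) ∣
        lift r * lift (v 0) - (lift (c 0) * (X 0 - X 1 ^ 2)
          + lift (c 3) * (-(X 0 * X 1))) := by
      refine key _ (r * v 0 - (c 0 * T36.zq lam + c 3 * (-(T36.xq lam * T36.yq lam)))) ?_
        (by linear_combination -e0)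
      simp only [map_sub, map_add, map_mul, map_neg, hlift]
      erw [hlift r, hlift (v 0), hlift (c 0), hlift (c 3)]
      rfl
    have d4 : (X 0 : MvPolynomial (Fin 2) k) * (X 0 - X 1 ^ 2) * (X 0 - C lam * X 1 ^ 2) ∣
        lift r * lift (v 4) - lift (c 4) * (X 0 * (X 0 - C lam * X 1 ^ 2)) := by
      refine key _ (r * v 4 - c 4 * (T36.xq lam * T36.z'q lam)) ?_ (by linear_combination -e4)
      simp only [map_sub, map_mul, hlift]
      erw [hlift r, hlift (v 4), hlift (c 4)]
      rfl
    have d1 : (X 0 : MvPolynomial (Fin 2) k) * (X 0 - X 1 ^ 2) * (X 0 - C lam * X 1 ^ 2) ∣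
        lift r * lift (v 1) - (lift (c 1) * (X 0 * (X 0 - X 1 ^ 2))
          + lift (c 4) * (-(X 0 * X 1))) := by
      refine key _ (r * v 1 - (c 1 * (T36.xq lam * T36.zq lam)
        + c 4 * (-(T36.xq lam * T36.yq lam)))) ?_ (by linear_combination -e1)
      simp only [map_sub, map_add, map_mul, map_neg, hlift]
      erw [hlift r, hlift (v 1), hlift (c 1), hlift (c 4)]
      rfl
    have d5 : (X 0 : MvPolynomial (Fin 2) k) * (X 0 - X 1 ^ 2) * (X 0 - C lam * X 1 ^ 2) ∣
        lift r * lift (v 5) - lift (c 5) * (X 0 * (X 0 - C lam * X 1 ^ 2)) := by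
      refine key _ (r * v 5 - c 5 * (T36.xq lam * T36.z'q lam)) ?_ (by linear_combination -e5)
      simp only [map_sub, map_mul, hlift]
      erw [hlift r, hlift (v 5), hlift (c 5)]
      rfl
    have d2 : (X 0 : MvPolynomial (Fin 2) k) * (X 0 - X 1 ^ 2) * (X 0 - C lam * X 1 ^ 2) ∣
        lift r * lift (v 2) - (lift (c 2) * (X 0 * (X 0 - X 1 ^ 2))
          + lift (c 5) * (-(X 0 * X 1))) := by
      refine key _ (r * v 2 - (c 2 * (T36.xq lam * T36.zq lam)
        + c 5 * (-(T36.xq lam * T36.yq lam)))) ?_ (by linear_combination -e2)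
      simp only [map_sub, map_add, map_mul, map_neg, hlift]
      erw [hlift r, hlift (v 2), hlift (c 2), hlift (c 5)]
      rfl
    obtain ⟨s0, u0, hv0, hv3⟩ := T36Aux.keyAB (X 0 - C lam * X 1 ^ 2) (T36Aux.prime_zc lam)
      (lift r) (lift (v 0)) (lift (v 3)) (lift (c 0)) (lift (c 3)) hxr hzr hz'r d3 d0
    obtain ⟨s1, u1, hv1, hv4⟩ := T36Aux.keyB (X 0 - C lam * X 1 ^ 2) (T36Aux.prime_zc lam)
      (lift r) (lift (v 1)) (lift (v 4)) (lift (c 1)) (lift (c 4)) hxr hzr hz'r d4 d1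
    obtain ⟨s2, u2, hv2, hv5⟩ := T36Aux.keyB (X 0 - C lam * X 1 ^ 2) (T36Aux.prime_zc lam)
      (lift r) (lift (v 2)) (lift (v 5)) (lift (c 2)) (lift (c 5)) hxr hzr hz'r d5 d2
    rw [Submodule.Quotient.mk_eq_zero]
    refine ⟨![T36.cls lam s0, T36.cls lam s1, T36.cls lam s2,
      T36.cls lam u0, T36.cls lam u1, T36.cls lam u2], ?_⟩
    rw [Matrix.vecMulLinear_apply, T36Aux.vecMul_Qa2R]
    funext j
    fin_cases j
    · show T36.cls lam s0 * T36.zq lam + T36.cls lam u0 * (-(T36.xq lam * T36.yq lam)) = v 0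
      rw [← hlift (v 0), hv0]
      simp only [T36.cls, T36.zq, T36.xq, T36.yq, map_add, map_mul, map_neg, map_sub, map_pow]
      rfl
    · show T36.cls lam s1 * (T36.xq lam * T36.zq lam)
        + T36.cls lam u1 * (-(T36.xq lam * T36.yq lam)) = v 1
      rw [← hlift (v 1), hv1]
      simp only [T36.cls, T36.zq, T36.xq, T36.yq, map_add, map_mul, map_neg, map_sub, map_pow]
      rfl
    · show T36.cls lam s2 * (T36.xq lam * T36.zq lam)
        + T36.cls lam u2 * (-(T36.xq lam * T36.yq lam)) = v 2
      rw [← hlift (v 2), hv2]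
      simp only [T36.cls, T36.zq, T36.xq, T36.yq, map_add, map_mul, map_neg, map_sub, map_pow]
      rfl
    · show T36.cls lam u0 * (T36.xq lam * T36.z'q lam) = v 3
      rw [← hlift (v 3), hv3]
      simp only [T36.cls, T36.z'q, T36.xq, map_mul, map_sub, map_pow]
      rfl
    · show T36.cls lam u1 * (T36.xq lam * T36.z'q lam) = v 4
      rw [← hlift (v 4), hv4]
      simp only [T36.cls, T36.z'q, T36.xq, map_mul, map_sub, map_pow]
      rfl
    · show T36.cls lam u2 * (T36.xq lam * T36.z'q lam) = v 5
      rw [← hlift (v 5), hv5]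
      simp only [T36.cls, T36.z'q, T36.xq, map_mul, map_sub, map_pow]
      rfl
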